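/- Let N be a binary phylogenetic network, H' a subgraph of N, and H = H'/∼ a minor of the underlying graph of N, endowed with an orientation induced by N (each edge [u][v] of H oriented according to some witnessing edge of N between the classes). If α_1, ..., α_d, β are nodes of H with directed edges α_i → β for all i = 1, ..., d, then the equivalence class β contains at least d - 1 reticulation nodes of N. -/

import Mathlib

open Set

namespace Phylo

variable {V : Type*}

/-- In-degree of a node in a digraph given by its edge relation. -/
noncomputable def inDeg (N : V → V → Prop) (v : V) : ℕ := {u | N u v}.ncard

/-- Out-degree of a node. -/
noncomputable def outDeg (N : V → V → Prop) (v : V) : ℕ := {w | N v w}.ncard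

/-- Reachability: existence of a directed path. -/
def Reach (N : V → V → Prop) : V → V → Prop := Relation.ReflTransGen N

/-- Leaves: nodes of out-degree 0. -/
def leaves (N : V → V → Prop) : Set V := {v | outDeg N v = 0}

/-- Internal tree nodes, i.e. the set `T(int N)`. -/
def ITN (N : V → V → Prop) : Set V := {v | inDeg N v ≤ 1 ∧ 1 ≤ outDeg N v}

/-- A (rooted) phylogenetic network structure on the digraph `N` with root `ρ`. -/
structure IsPhyloNet (N : V → V → Prop) (ρ : V) : Prop where
  acyclic : ∀ v, ¬ Relation.TransGen N v v
  root_indeg : inDeg N ρ = 0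
  root_connects : ∀ v, Reach N ρ v
  retic_out : ∀ v, 2 ≤ inDeg N v → outDeg N v = 1
  no_elementary : ∀ v, ¬ (inDeg N v = 1 ∧ outDeg N v = 1)

/-- Binarity of a phylogenetic network. -/
structure IsBinary (N : V → V → Prop) (ρ : V) : Prop where
  retic_deg : ∀ v, 2 ≤ inDeg N v → inDeg N v = 2 ∧ outDeg N v = 1
  tree_deg : ∀ v, v ≠ ρ → inDeg N v ≤ 1 → 1 ≤ outDeg N v →
      inDeg N v = 1 ∧ outDeg N v = 2
  root_deg : outDeg N ρ = 2 ∨ outDeg N ρ = 0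

/-- Tree-child: every internal node has a child of tree type (in-degree ≤ 1). -/
def IsTreeChild (N : V → V → Prop) : Prop :=
  ∀ v, 1 ≤ outDeg N v → ∃ w, N v w ∧ inDeg N w ≤ 1

/-- `u` is the tree-node root of a cherry. -/
def IsCherryRoot (N : V → V → Prop) (u : V) : Prop :=
  inDeg N u ≤ 1 ∧ ∃ x y, x ≠ y ∧ N u x ∧ N u y ∧ outDeg N x = 0 ∧ outDeg N y = 0 ∧
    ∀ w, N u w → w = x ∨ w = y

/-- `u` is the tree-node root of a reticulated cherry. -/
def IsRetCherryRoot (N : V → V → Prop) (u : V) : Prop :=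
  inDeg N u ≤ 1 ∧ ∃ h y, h ≠ y ∧ N u h ∧ N u y ∧ 2 ≤ inDeg N h ∧ outDeg N y = 0 ∧
    (∃ x, N h x ∧ outDeg N x = 0 ∧ ∀ w, N h w → w = x) ∧
    ∀ w, N u w → w = h ∨ w = y

/-- Terminal node: root of a cherry or of a reticulated cherry. -/
def IsTerminal (N : V → V → Prop) (u : V) : Prop :=
  IsCherryRoot N u ∨ IsRetCherryRoot N u

/-- Cherry reduction rooted at `u`: remove all descendant edges of `u`
(and hence all strict descendant tree nodes of `u` become isolated/removed). -/
def CR (N : V → V → Prop) (u : V) : V → V → Prop :=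
  fun a b => N a b ∧ ¬ Reach N u a

/-- `IsCRSeq N L` : `L` is the list of reduced nodes of a full cherry reduction
sequence of `N`, ending in a single-node network (no edges left). -/
def IsCRSeq : (V → V → Prop) → List V → Prop
  | N, [] => ∀ a b, ¬ N a b
  | N, u :: us => IsTerminal N u ∧ IsCRSeq (CR N u) us

/-- Orchard networks: those admitting a full cherry reduction sequence. -/
def IsOrchard (N : V → V → Prop) : Prop := ∃ L, IsCRSeq N L

/-- Underlying undirected graph of a digraph. -/
def underlying (N : V → V → Prop) : SimpleGraph V := SimpleGraph.fromRel N

/-- Cover relation of the reachability poset on internal tree nodes. -/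
def Covers (N : V → V → Prop) (u v : V) : Prop :=
  u ∈ ITN N ∧ v ∈ ITN N ∧ u ≠ v ∧ Reach N u v ∧
    ¬ ∃ z ∈ ITN N, z ≠ u ∧ z ≠ v ∧ Reach N u z ∧ Reach N z v

/-- Biconnected set of nodes of an undirected graph. -/
def IsBiconn (G : SimpleGraph V) (B : Set V) : Prop :=
  B.Nonempty ∧ (G.induce B).Preconnected ∧ ∀ v ∈ B, (G.induce (B \ {v})).Preconnected

/-- Blob: maximal biconnected component. -/
def IsBlob (G : SimpleGraph V) (B : Set V) : Prop :=
  IsBiconn G B ∧ ∀ B', IsBiconn G B' → B ⊆ B' → B' = B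

/-- Level of a network: maximum number of reticulations in a blob. -/
noncomputable def level (N : V → V → Prop) : ℕ :=
  sSup {k | ∃ B, IsBlob (underlying N) B ∧ k = (B ∩ {v | 2 ≤ inDeg N v}).ncard}

/-- `H` is a minor of `G`, presented by branch sets. -/
def IsMinorOf {α β : Type*} (H : SimpleGraph β) (G : SimpleGraph α) : Prop :=
  ∃ f : β → Set α,
    (∀ b, (f b).Nonempty) ∧
    (∀ b, (G.induce (f b)).Preconnected) ∧
    (∀ b b', b ≠ b' → Disjoint (f b) (f b')) ∧
    (∀ b b', H.Adj b b' → ∃ x ∈ f b, ∃ y ∈ f b', G.Adj x y)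

/-- A list is a linear extension of the reachability poset on `T(int N)`. -/
def IsLinExtList (N : V → V → Prop) (L : List V) : Prop :=
  L.Nodup ∧ (∀ v, v ∈ L ↔ v ∈ ITN N) ∧
  ∀ (i j : ℕ) (hi : i < L.length) (hj : j < L.length),
    Reach N (L.get ⟨i, hi⟩) (L.get ⟨j, hj⟩) → i ≤ j

/-- A list is a linear extension of the order-dual of the reachability poset. -/
def IsDualLinExtList (N : V → V → Prop) (L : List V) : Prop :=
  L.Nodup ∧ (∀ v, v ∈ L ↔ v ∈ ITN N) ∧
  ∀ (i j : ℕ) (hi : i < L.length) (hj : j < L.length),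
    Reach N (L.get ⟨j, hj⟩) (L.get ⟨i, hi⟩) → i ≤ j

end Phylo

open Phylo

namespace StmtAux
open SimpleGraph


variable {W : Type*}

lemma reach_del {G : SimpleGraph W} {v w : W}
    (hreach : (G \ fromEdgeSet {s(v, w)}).Reachable v w) :
    ∀ {a b : W}, G.Reachable a b → (G \ fromEdgeSet {s(v, w)}).Reachable a b := by
  intro a b hab
  obtain ⟨p⟩ := hab
  induction p with
  | nil => exact Reachable.refl _
  | @cons x y z h p ih =>
    refine Reachable.trans ?_ ih
    by_cases he : s(x, y) = s(v, w)
    · rw [Sym2.eq_iff] at he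
      rcases he with ⟨rfl, rfl⟩ | ⟨rfl, rfl⟩
      · exact hreach
      · exact hreach.symm
    · refine Adj.reachable ?_
      rw [sdiff_adj, fromEdgeSet_adj]
      exact ⟨h, fun hh => he (by simpa using hh.1)⟩

lemma card_le_edges_aux [Fintype W] :
    ∀ (n : ℕ) (G : SimpleGraph W), G.Preconnected → G.edgeSet.ncard = n →
      Fintype.card W ≤ n + 1 := by
  intro n
  induction n using Nat.strong_induction_on with
  | _ n ih =>
    intro G h hn
    classical
    by_cases hac : G.IsAcyclic
    · rcases isEmpty_or_nonempty W with hW | hW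
      · simp [Fintype.card_eq_zero]
      · have htree : G.IsTree := ⟨⟨h⟩, hac⟩
        haveI : Fintype G.edgeSet := (G.edgeSet.toFinite).fintype
        have h1 := htree.card_edgeFinset
        have h2 : G.edgeSet.toFinset = G.edgeFinset := rfl
        rw [← hn, Set.ncard_eq_toFinset_card', h2]
        omega
    · simp only [IsAcyclic, not_forall, not_not] at hac
      obtain ⟨u, c, hc⟩ := hac
      have hlen := hc.three_le_length
      have hne : c.edges ≠ [] := by
        intro h'
        have := c.length_edges
        rw [h'] at this
        simp at this
        omega
      have he : c.edges.head hne ∈ c.edges := List.head_mem hne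
      set e := c.edges.head hne with hedef
      clear_value e
      induction e using Sym2.ind with
      | _ u₁ u₂ =>
        have hadj : G.Adj u₁ u₂ := c.adj_of_mem_edges he
        have hnb : ¬ G.IsBridge s(u₁, u₂) := by
          intro hb
          rw [isBridge_iff_adj_and_forall_cycle_notMem hadj] at hb
          exact hb c hc he
        have hreach : (G \ fromEdgeSet {s(u₁, u₂)}).Reachable u₁ u₂ := by
          rw [isBridge_iff] at hnb
          push_neg at hnb
          exact hnb
        set G' := G \ fromEdgeSet {s(u₁, u₂)} with hG'
        have hpre : G'.Preconnected := fun x y => reach_del hreach (h x y)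
        have hES : G'.edgeSet = G.edgeSet \ {s(u₁, u₂)} := by
          rw [hG', edgeSet_sdiff, edgeSet_fromEdgeSet, edgeSet_sdiff_sdiff_isDiag]
        have hmem : s(u₁, u₂) ∈ G.edgeSet := hadj
        have hpos : 0 < n := by
          rw [← hn]
          exact (Set.ncard_pos (Set.toFinite _)).mpr ⟨_, hmem⟩
        have hcard : G'.edgeSet.ncard = n - 1 := by
          rw [hES, Set.ncard_diff_singleton_of_mem hmem, hn]
        have := ih (n - 1) (by omega) G' hpre hcard
        omega

lemma card_le_edges [Fintype W] (G : SimpleGraph W) (h : G.Preconnected) :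
    Fintype.card W ≤ G.edgeSet.ncard + 1 :=
  card_le_edges_aux _ G h rfl

lemma ncard_filter [Fintype W] (p : W → Prop) [DecidablePred p] :
    {x | p x}.ncard = (Finset.univ.filter p).card := by
  rw [Set.ncard_eq_toFinset_card', Set.toFinset_setOf]

end StmtAux
open StmtAux


/-- in an oriented minor of a binary phylogenetic network given
by branch sets `f` and orientation `D`, if `d` distinct nodes all have an edge
directed into a node `β`, then the class of `β` contains at least `d - 1`
reticulations of the network. -/
theorem stmt12 {V : Type*} [Fintype V] {β : Type*} (N : V → V → Prop) (ρ : V)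
    (hphy : IsPhyloNet N ρ) (hbin : IsBinary N ρ)
    (f : β → Set V) (D : β → β → Prop)
    (hne : ∀ b, (f b).Nonempty)
    (hconn : ∀ b, ((underlying N).induce (f b)).Preconnected)
    (hdisj : ∀ b b', b ≠ b' → Disjoint (f b) (f b'))
    (hor : ∀ b b', D b b' → ∃ x ∈ f b, ∃ y ∈ f b', N x y)
    (d : ℕ) (a : Fin d → β) (ha : Function.Injective a) (b₀ : β)
    (hab : ∀ i, a i ≠ b₀) (hedges : ∀ i, D (a i) b₀) :
    d - 1 ≤ (f b₀ ∩ {v | 2 ≤ inDeg N v}).ncard := by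

  classical
  choose x hx y hy hNxy using fun i => hor _ _ (hedges i)
  set S := f b₀ with hSdef
  set s : Finset V := Finset.univ.filter (· ∈ S) with hs
  set R : Finset V := Finset.univ.filter (fun v => v ∈ S ∧ 2 ≤ inDeg N v) with hR
  set P : Finset (V × V) := Finset.univ.filter (fun p => N p.1 p.2 ∧ p.2 ∈ S) with hP
  set I : Finset (V × V) :=
    Finset.univ.filter (fun p => N p.1 p.2 ∧ p.1 ∈ S ∧ p.2 ∈ S) with hI
  -- goal rewrite
  have hgoal : (f b₀ ∩ {v | 2 ≤ inDeg N v}).ncard = R.card := by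
    rw [show f b₀ ∩ {v | 2 ≤ inDeg N v} = {v | v ∈ S ∧ 2 ≤ inDeg N v} from rfl,
      ncard_filter]
  rw [hgoal]
  -- upper bound: P.card ≤ s.card + R.card
  have hfib : ∀ p ∈ P, p.2 ∈ s := by
    intro p hp
    simp only [hP, Finset.mem_filter, Finset.mem_univ, true_and] at hp
    simp [hs, hp.2]
  have hupper : P.card ≤ s.card + R.card := by
    rw [Finset.card_eq_sum_card_fiberwise hfib]
    have hterm : ∀ v ∈ s, (P.filter (fun p => p.2 = v)).card
        ≤ 1 + (if 2 ≤ inDeg N v then 1 else 0) := by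
      intro v hv
      have h1 : (P.filter (fun p => p.2 = v)).card ≤ inDeg N v := by
        rw [inDeg, ncard_filter]
        apply Finset.card_le_card_of_injOn (fun p => p.1)
        · intro p hp
          simp only [Finset.mem_coe, hP, Finset.mem_filter, Finset.mem_univ, true_and] at hp
          obtain ⟨⟨hN, _⟩, h2⟩ := hp
          simp [h2 ▸ hN]
        · intro p hp q hq hpq
          simp only [Finset.mem_coe, Finset.mem_filter, hP, Finset.mem_univ, true_and] at hp hq
          exact Prod.ext hpq (hp.2.trans hq.2.symm)
      split_ifs with h2
      · have := (hbin.retic_deg v h2).1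
        omega
      · omega
    calc ∑ v ∈ s, (P.filter (fun p => p.2 = v)).card
        ≤ ∑ v ∈ s, (1 + if 2 ≤ inDeg N v then 1 else 0) := Finset.sum_le_sum hterm
      _ = s.card + R.card := by
          have hb : ∑ v ∈ s, (if 2 ≤ inDeg N v then 1 else 0) = R.card := by
            rw [Finset.sum_boole]
            norm_num
            rw [hR, hs, Finset.filter_filter]
          rw [Finset.sum_add_distrib, Finset.sum_const, smul_eq_mul, mul_one, hb]
  -- nonempty class
  obtain ⟨v₀, hv₀⟩ := hne b₀
  have hv₀s : v₀ ∈ s := by simp [hs]; exact hv₀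
  have hs1 : 1 ≤ s.card := Finset.card_pos.mpr ⟨v₀, hv₀s⟩
  -- external edges
  set X : Finset (V × V) := Finset.univ.image (fun i : Fin d => (x i, y i)) with hX
  have hxS : ∀ i, x i ∉ S := fun i hiS =>
    Set.disjoint_left.mp (hdisj (a i) b₀ (hab i)) (hx i) hiS
  have hXcard : X.card = d := by
    rw [hX, Finset.card_image_of_injective _ ?_, Finset.card_univ, Fintype.card_fin]
    intro i j hij
    simp only [Prod.mk.injEq] at hij
    by_contra hne'
    have hd := hdisj (a i) (a j) (fun h => hne' (ha h))
    exact Set.disjoint_left.mp hd (hx i) (by rw [hij.1]; exact hx j)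
  have hXP : X ⊆ P := by
    intro p hp
    simp only [hX, Finset.mem_image, Finset.mem_univ, true_and] at hp
    obtain ⟨i, rfl⟩ := hp
    simp [hP, hNxy i, hy i]
  have hIP : I ⊆ P := by
    intro p hp
    simp only [hI, Finset.mem_filter, Finset.mem_univ, true_and] at hp
    simp [hP, hp.1, hp.2.2]
  have hdisjXI : Disjoint I X := by
    rw [Finset.disjoint_left]
    intro p hpI hpX
    simp only [hI, Finset.mem_filter, Finset.mem_univ, true_and] at hpI
    simp only [hX, Finset.mem_image, Finset.mem_univ, true_and] at hpX
    obtain ⟨i, rfl⟩ := hpX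
    exact hxS i hpI.2.1
  have hlowP : I.card + d ≤ P.card := by
    rw [← hXcard, ← Finset.card_union_of_disjoint hdisjXI]
    exact Finset.card_le_card (Finset.union_subset hIP hXP)
  -- internal edges lower bound via connectivity
  haveI : Fintype ↥S := Fintype.ofFinite _
  have hScard : Fintype.card ↥S = s.card := by
    rw [← Nat.card_eq_fintype_card, Nat.card_coe_set_eq, hs]
    exact ncard_filter (fun v => v ∈ S)
  have hconn0 := hconn b₀
  have hkey := card_le_edges ((underlying N).induce S) hconn0
  have hEI : ((underlying N).induce S).edgeSet.ncard ≤ I.card := by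
    have hIcard : I.card = {p : V × V | N p.1 p.2 ∧ p.1 ∈ S ∧ p.2 ∈ S}.ncard := by
      rw [ncard_filter]
    rw [hIcard]
    set φ : Sym2 ↥S → V × V := fun e =>
      if h : ∃ p : V × V, N p.1 p.2 ∧ Sym2.map Subtype.val e = s(p.1, p.2)
      then h.choose else (v₀, v₀) with hφ
    have hex : ∀ e ∈ ((underlying N).induce S).edgeSet,
        ∃ p : V × V, N p.1 p.2 ∧ Sym2.map Subtype.val e = s(p.1, p.2) := by
      intro e
      induction e using Sym2.ind with
      | _ u₁ u₂ =>
        intro hmem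
        rw [SimpleGraph.mem_edgeSet] at hmem
        have hadj : (underlying N).Adj u₁.val u₂.val := hmem
        rw [underlying, SimpleGraph.fromRel_adj] at hadj
        rcases hadj.2 with h | h
        · exact ⟨(u₁.val, u₂.val), h, by simp⟩
        · exact ⟨(u₂.val, u₁.val), h, by rw [Sym2.map_pair_eq, Sym2.eq_swap]⟩
    apply Set.ncard_le_ncard_of_injOn φ
    · intro e he
      have h := hex e he
      have hspec := h.choose_spec
      rw [hφ]
      simp only [dif_pos h]
      refine ⟨hspec.1, ?_, ?_⟩
      · have h1 := Sym2.mem_mk_left h.choose.1 h.choose.2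
        rw [← hspec.2, Sym2.mem_map] at h1
        obtain ⟨u, _, hu⟩ := h1
        rw [← hu]; exact u.2
      · have h1 := Sym2.mem_mk_right h.choose.1 h.choose.2
        rw [← hspec.2, Sym2.mem_map] at h1
        obtain ⟨u, _, hu⟩ := h1
        rw [← hu]; exact u.2
    · intro e he e' he' heq
      have h := hex e he
      have h' := hex e' he'
      have hspec := h.choose_spec
      have hspec' := h'.choose_spec
      rw [hφ] at heq
      simp only [dif_pos h, dif_pos h'] at heq
      have : Sym2.map Subtype.val e = Sym2.map Subtype.val e' := by
        rw [hspec.2, hspec'.2, heq]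
      exact Sym2.map.injective Subtype.val_injective this
  omega
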